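/- Let R be a commutative ring, G a group with an involution * such that g g* is central for all g, and let L = M(G, *, g₀) = G ∪ Gu be the loop obtained by doubling. If I is an ideal of the loop ring RL, then π_G(I) = π_u(I), this set is an ideal of RG, and it is invariant under *. Conversely, if J is a *-invariant ideal of RG, then J + Ju is an ideal of RL. -/

import Mathlib

/-- The involution on the group ring `RG` induced by an involution `st` on `G`. -/
noncomputable def starRG {R G : Type*} [CommRing R] [Group G] (st : G → G) :
    MonoidAlgebra R G → MonoidAlgebra R G :=
  fun x => MonoidAlgebra.mapDomain st x

/-- Multiplication on `RL = RG + RGu`, written on pairs `(a, b) = a + bu`: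
`(a+bu)(x+yu) = (ax + g₀·y*·b) + (ya + b·x*)u`. -/
noncomputable def doubledMul {R G : Type*} [CommRing R] [Group G] (st : G → G) (g₀ : G)
    (p q : MonoidAlgebra R G × MonoidAlgebra R G) :
    MonoidAlgebra R G × MonoidAlgebra R G :=
  (p.1 * q.1 + MonoidAlgebra.of R G g₀ * starRG st q.2 * p.2,
   q.2 * p.1 + p.2 * starRG st q.1)

/-- `I` is an ideal of the loop ring `RL` (an additive subgroup closed under left and
right multiplication by arbitrary elements of `RL`). -/
def IsLoopIdeal {R G : Type*} [CommRing R] [Group G] (st : G → G) (g₀ : G)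
    (I : Set (MonoidAlgebra R G × MonoidAlgebra R G)) : Prop :=
  (0 : MonoidAlgebra R G × MonoidAlgebra R G) ∈ I ∧
  (∀ p q, p ∈ I → q ∈ I → p + q ∈ I) ∧
  (∀ p, p ∈ I → -p ∈ I) ∧
  (∀ p, p ∈ I → ∀ q, doubledMul st g₀ p q ∈ I ∧ doubledMul st g₀ q p ∈ I)

/-- `J` is an ideal of the group ring `RG` which is invariant under the involution. -/
def IsStarIdealRG {R G : Type*} [CommRing R] [Group G] (st : G → G)
    (J : Set (MonoidAlgebra R G)) : Prop :=
  (0 : MonoidAlgebra R G) ∈ J ∧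
  (∀ x y, x ∈ J → y ∈ J → x + y ∈ J) ∧
  (∀ x, x ∈ J → -x ∈ J) ∧
  (∀ x, x ∈ J → ∀ a : MonoidAlgebra R G, a * x ∈ J ∧ x * a ∈ J) ∧
  (∀ x, x ∈ J → starRG st x ∈ J)

/-- Let `R` be a commutative ring and `G` a group with an involution `st` such that
`g · st g` is central for all `g`, and let `L = M(G, st, g₀)` be the doubled loop.  If `I`
is an ideal of the loop ring `RL`, then `π_G(I) = π_u(I)` and this set is a `*`-invariant
ideal of `RG`.  Conversely, if `J` is a `*`-invariant ideal of `RG`, then `J + Ju` is an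
ideal of `RL`. -/
theorem loop_ring_ideals {R G : Type*} [CommRing R] [Group G] (st : G → G)
    (hanti : ∀ g h : G, st (g * h) = st h * st g)
    (hinv : ∀ g : G, st (st g) = g)
    (hcent : ∀ g : G, g * st g ∈ Subgroup.center G)
    (g₀ : G) (hg₀ : g₀ ∈ Subgroup.center G) (hg₀fix : st g₀ = g₀) :
    (∀ I : Set (MonoidAlgebra R G × MonoidAlgebra R G), IsLoopIdeal st g₀ I →
      Prod.fst '' I = Prod.snd '' I ∧ IsStarIdealRG st (Prod.fst '' I)) ∧
    (∀ J : Set (MonoidAlgebra R G), IsStarIdealRG st J →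
      IsLoopIdeal st g₀ {p : MonoidAlgebra R G × MonoidAlgebra R G |
        p.1 ∈ J ∧ p.2 ∈ J}) := by
  have hst1 : st 1 = 1 := by
    have h := hanti 1 1
    rw [one_mul] at h
    exact mul_eq_left.mp h.symm
  have hS0 : starRG (R := R) (G := G) st 0 = 0 := MonoidAlgebra.mapDomain_zero st
  have hS1 : starRG (R := R) (G := G) st 1 = 1 := by
    simp [starRG, MonoidAlgebra.one_def, MonoidAlgebra.mapDomain_single, hst1]
  have hcancel : ∀ y : MonoidAlgebra R G,
      MonoidAlgebra.of R G g₀⁻¹ * (MonoidAlgebra.of R G g₀ * y) = y := by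
    intro y
    rw [← mul_assoc, ← map_mul, inv_mul_cancel, map_one, one_mul]
  constructor
  · intro I hI
    obtain ⟨h0, hadd, hneg, hmul⟩ := hI
    have hu : ∀ p ∈ I, (MonoidAlgebra.of R G g₀ * p.2, p.1) ∈ I := by
      intro p hp
      have := (hmul p hp (0, 1)).1
      simpa [doubledMul, hS0, hS1] using this
    have hu' : ∀ p ∈ I,
        (MonoidAlgebra.of R G g₀ * starRG st p.2, starRG st p.1) ∈ I := by
      intro p hp
      have := (hmul p hp (0, 1)).2
      simpa [doubledMul, hS0, hS1] using this
    have hr : ∀ p ∈ I, ∀ x, (p.1 * x, p.2 * starRG st x) ∈ I := by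
      intro p hp x
      have := (hmul p hp (x, 0)).1
      simpa [doubledMul, hS0] using this
    have hl : ∀ p ∈ I, ∀ x, (x * p.1, p.2 * x) ∈ I := by
      intro p hp x
      have := (hmul p hp (x, 0)).2
      simpa [doubledMul, hS0] using this
    have hsnd_fst : ∀ p ∈ I, p.2 ∈ Prod.fst '' I := by
      intro p hp
      have h1 := hu p hp
      have h2 := hl _ h1 (MonoidAlgebra.of R G g₀⁻¹)
      refine ⟨_, h2, ?_⟩
      exact hcancel p.2
    constructor
    · ext x
      constructor
      · rintro ⟨p, hp, rfl⟩
        exact ⟨_, hu p hp, rfl⟩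
      · rintro ⟨p, hp, rfl⟩
        exact hsnd_fst p hp
    · refine ⟨⟨0, h0, rfl⟩, ?_, ?_, ?_, ?_⟩
      · rintro x y ⟨p, hp, rfl⟩ ⟨q, hq, rfl⟩
        exact ⟨p + q, hadd p q hp hq, rfl⟩
      · rintro x ⟨p, hp, rfl⟩
        exact ⟨-p, hneg p hp, rfl⟩
      · rintro x ⟨p, hp, rfl⟩ a
        exact ⟨⟨_, hl p hp a, rfl⟩, ⟨_, hr p hp a, rfl⟩⟩
      · rintro x ⟨p, hp, rfl⟩
        have h1 := hu p hp
        have h2 := hu' _ h1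
        have h3 := hl _ h2 (MonoidAlgebra.of R G g₀⁻¹)
        refine ⟨_, h3, ?_⟩
        exact hcancel (starRG st p.1)
  · intro J hJ
    obtain ⟨j0, jadd, jneg, jmul, jstar⟩ := hJ
    refine ⟨⟨j0, j0⟩, ?_, ?_, ?_⟩
    · rintro p q ⟨hp1, hp2⟩ ⟨hq1, hq2⟩
      exact ⟨jadd _ _ hp1 hq1, jadd _ _ hp2 hq2⟩
    · rintro p ⟨hp1, hp2⟩
      exact ⟨jneg _ hp1, jneg _ hp2⟩
    · rintro p ⟨hp1, hp2⟩ q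
      constructor
      · constructor
        · exact jadd _ _ (jmul _ hp1 q.1).2
            (jmul _ hp2 (MonoidAlgebra.of R G g₀ * starRG st q.2)).1
        · exact jadd _ _ (jmul _ hp1 q.2).1 (jmul _ hp2 (starRG st q.1)).2
      · constructor
        · refine jadd _ _ (jmul _ hp1 q.1).1 ?_
          have h1 : starRG st p.2 * q.2 ∈ J := (jmul _ (jstar _ hp2) q.2).2
          have h2 := (jmul _ h1 (MonoidAlgebra.of R G g₀)).1
          rwa [← mul_assoc] at h2
        · exact jadd _ _ (jmul _ hp2 q.1).2 (jmul _ (jstar _ hp1) q.2).1
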